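/- Let n = sm, k ≥ 2, and let F be a polynomial with coefficients in F_{2^s} which, as a function on F_{2^n}, is differentially 2k-uniform. If m is not divisible by any integer t with 2 ≤ t ≤ k, then for every nonzero a in F_{2^s} and every b in F_{2^s}, the equation F(x+a)+F(x)=b has no solution x in F_{2^n} \ F_{2^s}. -/
import Mathlib


/-- `F` with coefficients in `𝔽_{2^s}` (it commutes with `x ↦ x^{2^s}`),
differentially `2k`-uniform over `𝔽_{2^n}` (`n = s·m`, `k ≥ 2`), with `m` not divisible by any
integer `2 ≤ t ≤ k`: then for `a ∈ 𝔽_{2^s}*`, `b ∈ 𝔽_{2^s}`, all solutions of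
`F(x+a)+F(x)=b` lie in `𝔽_{2^s}` (i.e. satisfy `x ^ 2 ^ s = x`). -/
theorem stmt_1 (s m n k : ℕ) (hs : 0 < s) (hm : 0 < m) (hn : n = s * m) (hk : 2 ≤ k)
    (hmdiv : ∀ t : ℕ, 2 ≤ t → t ≤ k → ¬ t ∣ m)
    (F : GaloisField 2 n → GaloisField 2 n)
    (hcoef : ∀ x : GaloisField 2 n, F (x ^ 2 ^ s) = F x ^ 2 ^ s)
    (hdu : ∀ a b : GaloisField 2 n, a ≠ 0 →
      Nat.card {x : GaloisField 2 n // F (x + a) + F x = b} ≤ 2 * k)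
    (a b : GaloisField 2 n) (ha : a ^ 2 ^ s = a) (ha0 : a ≠ 0) (hb : b ^ 2 ^ s = b) :
    ∀ x : GaloisField 2 n, F (x + a) + F x = b → x ^ 2 ^ s = x := by
  classical
  intro x hx
  by_contra hxs
  set f : GaloisField 2 n → GaloisField 2 n := fun y => y ^ 2 ^ s with hf
  have hfdef : ∀ y : GaloisField 2 n, f y = y ^ 2 ^ s := fun _ => rfl
  -- f is additive
  have hfadd : ∀ u v : GaloisField 2 n, f (u + v) = f u + f v := by
    intro u v
    simp only [hfdef]
    exact add_pow_char_pow u v 2 s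
  have hfaa : f a = a := ha
  have hfbb : f b = b := hb
  have hchar2 : ∀ u : GaloisField 2 n, u + u = 0 := fun u => CharTwo.add_self_eq_zero u
  have hfplus : ∀ y : GaloisField 2 n, f (y + a) = f y + a := by
    intro y; rw [hfadd, hfaa]
  -- iterates commute with +a
  have hfa : ∀ (i : ℕ) (y : GaloisField 2 n), f^[i] (y + a) = f^[i] y + a := by
    intro i
    induction i with
    | zero => simp
    | succ i ih =>
      intro y
      rw [Function.iterate_succ_apply, hfplus, ih, Function.iterate_succ_apply]
  -- every element satisfies y^(2^n) = y
  have hn0 : n ≠ 0 := by rw [hn]; exact Nat.mul_ne_zero (by omega) (by omega)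
  have hcardK : Nat.card (GaloisField 2 n) = 2 ^ n := GaloisField.card 2 n hn0
  have hfin : Fintype (GaloisField 2 n) := Fintype.ofFinite _
  have hpowcard : ∀ y : GaloisField 2 n, y ^ 2 ^ n = y := by
    intro y
    have := FiniteField.pow_card y
    rwa [← Nat.card_eq_fintype_card, hcardK] at this
  -- iterates are powers
  have hiter : ∀ (i : ℕ) (y : GaloisField 2 n), f^[i] y = y ^ 2 ^ (s * i) := by
    intro i
    induction i with
    | zero => simp
    | succ i ih =>
      intro y
      rw [Function.iterate_succ_apply', ih, hfdef, ← pow_mul, ← pow_add, Nat.mul_succ]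
  -- x is periodic with period m
  have hper : Function.IsPeriodicPt f m x := by
    show f^[m] x = x
    rw [hiter, ← hn, hpowcard]
  set t := Function.minimalPeriod f x with ht
  have htdvd : t ∣ m := hper.minimalPeriod_dvd
  have htpos : 0 < t := Function.IsPeriodicPt.minimalPeriod_pos hm hper
  have htne1 : t ≠ 1 := by
    intro h1
    apply hxs
    have h2 := Function.iterate_minimalPeriod (f := f) (x := x)
    rw [← ht, h1] at h2
    simpa [hfdef] using h2
  have ht2 : 2 ≤ t := by omega
  have htk : k < t := by
    by_contra hle
    exact hmdiv t ht2 (by omega) htdvd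
  have htodd : ¬ 2 ∣ t := fun h => hmdiv 2 le_rfl hk (h.trans htdvd)
  -- solutions are closed under f
  have hsolf : ∀ y : GaloisField 2 n, F (y + a) + F y = b → F (f y + a) + F (f y) = b := by
    intro y hy
    calc F (f y + a) + F (f y) = F (f (y + a)) + F (f y) := by rw [hfplus]
      _ = f (F (y + a)) + f (F y) := by simp only [hfdef, hcoef]
      _ = f (F (y + a) + F y) := (hfadd _ _).symm
      _ = b := by rw [hy, hfbb]
  have hsoliter : ∀ i : ℕ, F (f^[i] x + a) + F (f^[i] x) = b := by
    intro i
    induction i with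
    | zero => simpa using hx
    | succ i ih => rw [Function.iterate_succ_apply']; exact hsolf _ ih
  have hsolshift : ∀ i : ℕ, F ((f^[i] x + a) + a) + F (f^[i] x + a) = b := by
    intro i
    have h : f^[i] x + a + a = f^[i] x := by rw [add_assoc, hchar2, add_zero]
    rw [h, add_comm]
    exact hsoliter i
  -- key distinctness: f^[i] x + a ≠ f^[j] x for i, j < t
  have hcross : ∀ i j : ℕ, i < t → j < t → f^[i] x + a ≠ f^[j] x := by
    intro i j hi hj heq
    have h1 : f^[t - i] (f^[i] x + a) = f^[t - i] (f^[j] x) := by rw [heq]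
    rw [hfa, ← Function.iterate_add_apply, ← Function.iterate_add_apply] at h1
    have h2 : t - i + i = t := by omega
    rw [h2, Function.iterate_minimalPeriod] at h1
    set e := t - i + j with he
    -- h1 : x + a = f^[e] x
    have h3 : f^[e] (x + a) = f^[e] (f^[e] x) := by rw [← h1]
    rw [hfa, ← Function.iterate_add_apply, ← h1] at h3
    -- h3 : (x + a) + a = f^[e+e] x
    have h4 : f^[e + e] x = x := by
      rw [← h3, add_assoc, hchar2, add_zero]
    have h5 : t ∣ e + e := Function.IsPeriodicPt.minimalPeriod_dvd h4
    have hcop : Nat.Coprime t 2 := ((Nat.Prime.coprime_iff_not_dvd Nat.prime_two).mpr htodd).symm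
    have h6 : t ∣ e := by
      refine Nat.Coprime.dvd_of_dvd_mul_right hcop ?_
      rwa [mul_two]
    have h7 : Function.IsPeriodicPt f e x :=
      (Function.isPeriodicPt_iff_minimalPeriod_dvd).mpr h6
    rw [h7] at h1
    have : a = 0 := by linear_combination h1
    exact ha0 this
  -- build the finset of 2t solutions
  set S1 : Finset (GaloisField 2 n) := (Finset.range t).image (fun i => f^[i] x) with hS1
  set S2 : Finset (GaloisField 2 n) := (Finset.range t).image (fun i => f^[i] x + a) with hS2
  have hinj : Set.InjOn (fun i => f^[i] x) (Finset.range t) := by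
    intro i hi j hj hij
    exact Function.iterate_injOn_Iio_minimalPeriod
      (by simpa using hi) (by simpa using hj) hij
  have hcard1 : S1.card = t := by
    rw [hS1, Finset.card_image_of_injOn hinj, Finset.card_range]
  have hcard2 : S2.card = t := by
    rw [hS2, Finset.card_image_of_injOn, Finset.card_range]
    intro i hi j hj hij
    exact hinj hi hj (by simpa using add_right_cancel hij)
  have hdisj : Disjoint S1 S2 := by
    rw [Finset.disjoint_left]
    rintro y hy1 hy2
    simp only [hS1, hS2, Finset.mem_image, Finset.mem_range] at hy1 hy2
    obtain ⟨j, hj, hyj⟩ := hy1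
    obtain ⟨i, hi, hyi⟩ := hy2
    exact hcross i j hi hj (hyi.trans hyj.symm)
  have hcardU : (S1 ∪ S2).card = 2 * t := by
    rw [Finset.card_union_of_disjoint hdisj, hcard1, hcard2]; ring
  have hsub : (↑(S1 ∪ S2) : Set (GaloisField 2 n)) ⊆
      {y : GaloisField 2 n | F (y + a) + F y = b} := by
    intro y hy
    simp only [Finset.coe_union, Set.mem_union, hS1, hS2, Finset.coe_image,
      Set.mem_image, Finset.mem_coe, Finset.mem_range] at hy
    rcases hy with ⟨i, _, rfl⟩ | ⟨i, _, rfl⟩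
    · exact hsoliter i
    · exact hsolshift i
  have hineq : 2 * t ≤ 2 * k := by
    calc 2 * t = (S1 ∪ S2).card := hcardU.symm
      _ = (↑(S1 ∪ S2) : Set (GaloisField 2 n)).ncard := (Set.ncard_coe_finset _).symm
      _ ≤ ({y : GaloisField 2 n | F (y + a) + F y = b}).ncard :=
          Set.ncard_le_ncard hsub (Set.toFinite _)
      _ = Nat.card {y : GaloisField 2 n // F (y + a) + F y = b} :=
          (Nat.card_coe_set_eq _).symm
      _ ≤ 2 * k := hdu a b ha0
  omega
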